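/- Let e : V → ℝ and γ ∈ ℝ satisfy ∑_{w ∈ V, w ≠ v} K(v,w)·μ(U_w)·(e(w) − e(v)) = γ·e(v) for every v ∈ V (i.e. e is an eigenvector, with eigenvalue γ, of the Laplacian matrix associated with the weight matrix (K(v,w)·μ(U_w))_{v,w∈V}). Let φ = ∑_{v∈V} e(v)·1_{U_v} be the corresponding locally constant function on Z. Then for every x ∈ Z, H φ(x) = γ·φ(x). (Locally-constant part of the spectral theorem for H_• on L²(Z, dx).) -/

import Mathlib

open MeasureTheory

/-- The vertex whose ball contains `x` (junk value if there is none). -/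
noncomputable def vertexOf {p : ℕ} [Fact p.Prime] {V : Type*} [Nonempty V]
    (U : V → Set ℚ_[p]) (x : ℚ_[p]) : V :=
  haveI := Classical.propDecidable (∃ v, x ∈ U v)
  if h : ∃ v, x ∈ U v then h.choose else Classical.arbitrary V

/-- The kernel `k_p(x,y) = |x − y|_p^{−α}` if `x, y` lie in the same vertex ball,
and `k_p(x,y) = K(v(x), v(y))` otherwise. -/
noncomputable def graphKernel {p : ℕ} [Fact p.Prime] {V : Type*} [Nonempty V]
    [DecidableEq V] (U : V → Set ℚ_[p]) (α : ℝ) (K : V → V → ℝ)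
    (x y : ℚ_[p]) : ℝ :=
  if vertexOf U x = vertexOf U y then ‖x - y‖ ^ (-α)
  else K (vertexOf U x) (vertexOf U y)

/-- The p-adic graph Laplacian `H u (x) = ∫_Z k_p(x,y)(u(y) − u(x)) dμ(y)` on
`Z = ⋃_v U_v` (real-valued version). -/
noncomputable def graphLaplacianR {p : ℕ} [Fact p.Prime] {V : Type*} [Nonempty V]
    [DecidableEq V] [MeasurableSpace ℚ_[p]] (μ : Measure ℚ_[p])
    (U : V → Set ℚ_[p]) (α : ℝ) (K : V → V → ℝ) (u : ℚ_[p] → ℝ) (x : ℚ_[p]) : ℝ :=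
  ∫ y in ⋃ v, U v, graphKernel U α K x y * (u y - u x) ∂μ

lemma vertexOf_eq {p : ℕ} [Fact p.Prime] {V : Type*} [Nonempty V]
    {U : V → Set ℚ_[p]} (hdisj : Pairwise (Function.onFun Disjoint U))
    {y : ℚ_[p]} {w : V} (hy : y ∈ U w) : vertexOf U y = w := by
  unfold vertexOf
  have h : ∃ v, y ∈ U v := ⟨w, hy⟩
  rw [dif_pos h]
  by_contra hne
  exact Set.disjoint_left.mp (hdisj hne) h.choose_spec hy

/-- **Locally-constant part of the spectral theorem for the p-adic graph Laplacian
`H_•` on `L²(Z, dx)`**: if `e : V → ℝ` is an eigenvector with eigenvalue `γ` of the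
Laplacian matrix of the weight matrix `(K(v,w)·μ(U_w))`, then the locally constant
function `φ = ∑_v e(v)·1_{U_v}` satisfies `H φ = γ·φ` on `Z`. -/
theorem locally_constant_eigenfunction_graphLaplacian (p : ℕ) [Fact p.Prime]
    [MeasurableSpace ℚ_[p]] [BorelSpace ℚ_[p]]
    (μ : Measure ℚ_[p]) [μ.IsAddHaarMeasure]
    (hμ : μ {x : ℚ_[p] | ‖x‖ ≤ 1} = 1)
    {V : Type*} [Fintype V] [Nonempty V] [DecidableEq V]
    (U : V → Set ℚ_[p]) (bc : V → ℚ_[p]) (rad : V → ℤ)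
    (hU : ∀ v, U v = {x : ℚ_[p] | ‖x - bc v‖ ≤ (p : ℝ) ^ (-(rad v))})
    (hdisj : Pairwise (Function.onFun Disjoint U))
    (α : ℝ) (K : V → V → ℝ)
    (hK_nonneg : ∀ v w, 0 ≤ K v w) (hK_symm : ∀ v w, K v w = K w v)
    (hK_diag : ∀ v, K v v = 0)
    (e : V → ℝ) (γ : ℝ)
    (heig : ∀ v, ∑ w ∈ Finset.univ.erase v,
        K v w * (μ (U w)).toReal * (e w - e v) = γ * e v) :
    ∀ x ∈ ⋃ w, U w,
      graphLaplacianR μ U α K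
          (fun z => ∑ v, Set.indicator (U v) (fun _ => e v) z) x
        = γ * ∑ v, Set.indicator (U v) (fun _ => e v) x := by
  intro x hx
  obtain ⟨v, hxv⟩ := Set.mem_iUnion.mp hx
  set φ : ℚ_[p] → ℝ := fun z => ∑ v, Set.indicator (U v) (fun _ => e v) z with hφdef
  have hφ : ∀ (w : V) (y : ℚ_[p]), y ∈ U w → φ y = e w := by
    intro w y hy
    simp only [hφdef]
    rw [Finset.sum_eq_single w]
    · simp [Set.indicator_of_mem hy]
    · intro b _ hb
      exact Set.indicator_of_notMem
        (fun hyb => Set.disjoint_left.mp (hdisj hb) hyb hy) _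
    · intro h; exact absurd (Finset.mem_univ w) h
  have hUm : ∀ w, MeasurableSet (U w) := by
    intro w
    rw [hU w]
    exact (isClosed_le ((continuous_id.sub continuous_const).norm) continuous_const).measurableSet
  have hUfin : ∀ w, μ (U w) < ⊤ := by
    intro w
    have : U w = Metric.closedBall (bc w) ((p : ℝ) ^ (-(rad w))) := by
      rw [hU w]; ext y; simp only [Metric.mem_closedBall, dist_eq_norm, Set.mem_setOf_eq]
    rw [this]
    exact (isCompact_closedBall _ _).measure_lt_top
  have hZm : MeasurableSet (⋃ w, U w) := MeasurableSet.iUnion fun w => hUm w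
  have key : ∀ y ∈ ⋃ w, U w,
      graphKernel U α K x y * (φ y - φ x)
        = ∑ w, Set.indicator (U w) (fun _ => K v w * (e w - e v)) y := by
    intro y hy
    obtain ⟨w, hyw⟩ := Set.mem_iUnion.mp hy
    have hRHS : (∑ w, Set.indicator (U w) (fun _ => K v w * (e w - e v)) y)
        = K v w * (e w - e v) := by
      rw [Finset.sum_eq_single w]
      · simp [Set.indicator_of_mem hyw]
      · intro b _ hb
        exact Set.indicator_of_notMem
          (fun hyb => Set.disjoint_left.mp (hdisj hb) hyb hyw) _
      · intro h; exact absurd (Finset.mem_univ w) h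
    rw [hRHS, hφ v x hxv, hφ w y hyw]
    unfold graphKernel
    rw [vertexOf_eq hdisj hxv, vertexOf_eq hdisj hyw]
    by_cases hvw : v = w
    · subst hvw; simp [hK_diag]
    · rw [if_neg hvw]
  unfold graphLaplacianR
  rw [setIntegral_congr_fun hZm key]
  rw [integral_finset_sum _ (by
    intro w _
    exact (((integrable_indicator_iff (hUm w)).mpr
      (integrableOn_const (hUfin w).ne))).restrict)]
  have hterm : ∀ w : V, (∫ y in ⋃ u, U u,
      Set.indicator (U w) (fun _ => K v w * (e w - e v)) y ∂μ)
        = K v w * (μ (U w)).toReal * (e w - e v) := by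
    intro w
    rw [setIntegral_indicator (hUm w),
      Set.inter_eq_self_of_subset_right (Set.subset_iUnion U w),
      setIntegral_const]
    simp only [smul_eq_mul, Measure.real]; ring
  simp only [hterm]
  have : (∑ w, K v w * (μ (U w)).toReal * (e w - e v))
      = ∑ w ∈ Finset.univ.erase v, K v w * (μ (U w)).toReal * (e w - e v) := by
    rw [Finset.sum_erase]
    simp [hK_diag]
  rw [this, heig v]
  exact congrArg (fun t => γ * t) (hφ v x hxv).symm
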